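/- Let S be an ergodic measure-preserving transformation of a standard probability space (Y,ν). Let (A_n) be a sequence of Borel subsets of Y such that ν(A_n) → δ > 0 and ‖1_{A_n}∘S − 1_{A_n}‖_{L²} → 0. Then for every Borel subset B ⊆ Y, ν(B ∩ A_n) → ν(B)·δ. -/

import Mathlib

open MeasureTheory Filter Topology

section Aux

variable {Y : Type*} [MeasurableSpace Y] {ν : Measure Y} [IsProbabilityMeasure ν]

local notation "⟪" x ", " y "⟫" => @inner ℝ _ _ x y

lemma aux_inner_ind (s t : Set Y) (hs : MeasurableSet s) (ht : MeasurableSet t) :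
    ⟪(indicatorConstLp 2 hs (measure_ne_top ν s) (1:ℝ) : Lp ℝ 2 ν),
      indicatorConstLp 2 ht (measure_ne_top ν t) (1:ℝ)⟫ = (ν (s ∩ t)).toReal := by
  rw [L2.inner_indicatorConstLp_one hs (measure_ne_top ν s)]
  have h1 : ∫ x in s, (indicatorConstLp 2 ht (measure_ne_top ν t) (1:ℝ) : Lp ℝ 2 ν) x ∂ν
      = ∫ x in s, t.indicator (fun _ => (1:ℝ)) x ∂ν := by
    refine integral_congr_ae (ae_restrict_of_ae ?_)
    exact indicatorConstLp_coeFn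
  rw [h1, setIntegral_indicator ht]
  simp [setIntegral_const]; rfl

end Aux

local notation "⟪" x ", " y "⟫" => @inner ℝ _ _ x y

set_option maxHeartbeats 2000000 in
set_option synthInstance.maxHeartbeats 400000 in
theorem stmt0 {Y : Type*} [MeasurableSpace Y] (ν : Measure Y) [IsProbabilityMeasure ν]
    (S : Y → Y) (hS : Ergodic S ν)
    (A : ℕ → Set Y) (hA : ∀ n, MeasurableSet (A n))
    (δ : ℝ) (hδ : 0 < δ)
    (hAδ : Tendsto (fun n => (ν (A n)).toReal) atTop (𝓝 δ))
    (hinv : Tendsto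
      (fun n => ∫ y, ((A n).indicator (fun _ => (1:ℝ)) (S y)
        - (A n).indicator (fun _ => (1:ℝ)) y) ^ 2 ∂ν) atTop (𝓝 0)) :
    ∀ B : Set Y, MeasurableSet B →
      Tendsto (fun n => (ν (B ∩ A n)).toReal) atTop (𝓝 ((ν B).toReal * δ)) := by
  intro B hB
  haveI : Fact ((1:ENNReal) ≤ 2) := fact_one_le_two_ennreal
  set U : Lp ℝ 2 ν →ₗᵢ[ℝ] Lp ℝ 2 ν :=
    Lp.compMeasurePreservingₗᵢ ℝ S hS.toMeasurePreserving with hUdef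
  set T : Lp ℝ 2 ν →L[ℝ] Lp ℝ 2 ν := U.toContinuousLinearMap with hTdef
  have hTU : ∀ x : Lp ℝ 2 ν, T x = U x := fun x => rfl
  have hTnorm : ‖T‖ ≤ 1 := U.norm_toContinuousLinearMap_le
  set f : ℕ → Lp ℝ 2 ν :=
    fun n => indicatorConstLp 2 (hA n) (measure_ne_top ν (A n)) (1:ℝ) with hfdef
  set gB : Lp ℝ 2 ν := indicatorConstLp 2 hB (measure_ne_top ν B) (1:ℝ) with hgBdef
  set oneL : Lp ℝ 2 ν :=
    indicatorConstLp 2 MeasurableSet.univ (measure_ne_top ν _) (1:ℝ) with honedef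
  have hone_coe : (oneL : Y → ℝ) =ᵐ[ν] fun _ => (1:ℝ) := by
    filter_upwards [(indicatorConstLp_coeFn :
      (oneL : Y → ℝ) =ᵐ[ν] Set.univ.indicator fun _ => (1:ℝ))] with y hy
    rw [hy, Set.indicator_univ]
  -- T fixes constants
  have hTone : T oneL = oneL := by
    refine Lp.ext ?_
    have h1 := Lp.coeFn_compMeasurePreserving oneL hS.toMeasurePreserving
    have h2 : (oneL : Y → ℝ) ∘ S =ᵐ[ν] (fun _ => (1:ℝ)) ∘ S :=
      hS.toMeasurePreserving.quasiMeasurePreserving.ae_eq_comp hone_coe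
    have h3 : (T oneL : Y → ℝ) =ᵐ[ν] (oneL : Y → ℝ) ∘ S := h1
    exact h3.trans (h2.trans hone_coe.symm)
  -- asymptotic invariance in norm
  have hεnn : ∀ n, (0:ℝ) ≤ ‖T (f n) - f n‖ := fun n => norm_nonneg _
  have hnorm_eq : ∀ n, ∫ y, ((A n).indicator (fun _ => (1:ℝ)) (S y)
      - (A n).indicator (fun _ => (1:ℝ)) y) ^ 2 ∂ν = ‖T (f n) - f n‖ ^ 2 := by
    intro n
    have hco : ((T (f n) - f n : Lp ℝ 2 ν) : Y → ℝ) =ᵐ[ν]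
        fun y => (A n).indicator (fun _ => (1:ℝ)) (S y)
          - (A n).indicator (fun _ => (1:ℝ)) y := by
      have h1 : (T (f n) : Y → ℝ) =ᵐ[ν] (f n : Y → ℝ) ∘ S :=
        Lp.coeFn_compMeasurePreserving (f n) hS.toMeasurePreserving
      have h2 : ((f n : Y → ℝ)) ∘ S =ᵐ[ν]
          (fun y => (A n).indicator (fun _ => (1:ℝ)) y) ∘ S :=
        hS.toMeasurePreserving.quasiMeasurePreserving.ae_eq_comp indicatorConstLp_coeFn
      filter_upwards [Lp.coeFn_sub (T (f n)) (f n), h1, h2,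
        (indicatorConstLp_coeFn : (f n : Y → ℝ) =ᵐ[ν] (A n).indicator fun _ => (1:ℝ))]
        with y e1 e2 e3 e4
      simp only [Pi.sub_apply] at e1 ⊢
      rw [e1, e2, e4]
      have : ((f n : Y → ℝ) ∘ S) y = (A n).indicator (fun _ => (1:ℝ)) (S y) := e3
      rw [this]
    have h5 : ‖T (f n) - f n‖ ^ 2 = ⟪T (f n) - f n, T (f n) - f n⟫ :=
      (real_inner_self_eq_norm_sq _).symm
    rw [h5, L2.inner_def]
    refine integral_congr_ae ?_
    filter_upwards [hco] with y e
    rw [e]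
    simp [RCLike.inner_apply, sq]
  have hε0 : Tendsto (fun n => ‖T (f n) - f n‖) atTop (𝓝 0) := by
    have h := hinv
    simp_rw [hnorm_eq] at h
    have h2 := (Real.continuous_sqrt.tendsto 0).comp h
    simp only [Function.comp_def, Real.sqrt_zero] at h2
    have : (fun n => Real.sqrt (‖T (f n) - f n‖ ^ 2)) = fun n => ‖T (f n) - f n‖ := by
      funext n; exact Real.sqrt_sq (hεnn n)
    rwa [this] at h2
  -- inner products with f n
  have hinner_gB : ∀ n, ⟪gB, f n⟫ = (ν (B ∩ A n)).toReal := fun n =>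
    aux_inner_ind B (A n) hB (hA n)
  -- iterates preserve inner products
  have hTinner : ∀ (k : ℕ) (x y : Lp ℝ 2 ν), ⟪(⇑T)^[k] x, (⇑T)^[k] y⟫ = ⟪x, y⟫ := by
    intro k
    induction k with
    | zero => intro x y; simp
    | succ k ih =>
      intro x y
      rw [Function.iterate_succ_apply, Function.iterate_succ_apply, ih]
      exact U.inner_map_map x y
  have hTiso : Isometry (⇑T) := by
    have : (⇑T : Lp ℝ 2 ν → Lp ℝ 2 ν) = ⇑U := rfl
    rw [this]; exact U.isometry
  have hTisok : ∀ k : ℕ, Isometry ((⇑T)^[k]) := by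
    intro k
    induction k with
    | zero => simpa using isometry_id
    | succ k ih => rw [Function.iterate_succ]; exact ih.comp hTiso
  have hTnormiter : ∀ (k : ℕ) (x : Lp ℝ 2 ν), ‖(⇑T)^[k] x‖ = ‖x‖ := by
    intro k x
    have h0 : (⇑T)^[k] (0 : Lp ℝ 2 ν) = 0 := by
      induction k with
      | zero => simp
      | succ k ih => rw [Function.iterate_succ_apply', ih]; simp
    have := (hTisok k).dist_eq x 0
    rwa [dist_eq_norm, dist_eq_norm, h0, sub_zero, sub_zero] at this
  -- telescoping
  have hTiter : ∀ (k : ℕ) (x : Lp ℝ 2 ν), ‖(⇑T)^[k] x - x‖ ≤ k * ‖T x - x‖ := by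
    intro k
    induction k with
    | zero => intro x; simp
    | succ k ih =>
      intro x
      have h1 : ‖(⇑T)^[k+1] x - x‖ ≤ ‖(⇑T)^[k] (T x) - (⇑T)^[k] x‖ + ‖(⇑T)^[k] x - x‖ := by
        rw [Function.iterate_succ_apply]
        exact norm_sub_le_norm_sub_add_norm_sub _ _ _
      have h2 : ‖(⇑T)^[k] (T x) - (⇑T)^[k] x‖ = ‖T x - x‖ := by
        have := (hTisok k).dist_eq (T x) x
        rwa [dist_eq_norm, dist_eq_norm] at this
      have h3 := ih x
      have : ((k:ℝ) + 1) * ‖T x - x‖ = ‖T x - x‖ + k * ‖T x - x‖ := by ring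
      push_cast
      linarith
    -- norm bound for f n
  have hfnorm : ∀ n, ‖f n‖ ≤ 1 := by
    intro n
    rw [hfdef]
    rw [norm_indicatorConstLp two_ne_zero ENNReal.ofNat_ne_top]
    rw [norm_one, one_mul]
    refine Real.rpow_le_one ENNReal.toReal_nonneg ?_ (by positivity)
    have := ENNReal.toReal_mono ENNReal.one_ne_top (prob_le_one (μ := ν) (s := A n))
    simpa using this
  -- mean ergodic theorem
  have hbirk0 := T.tendsto_birkhoffAverage_orthogonalProjection hTnorm gB
  obtain ⟨P, hbirk, hPfix, hPorth⟩ : ∃ P : Lp ℝ 2 ν,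
      Tendsto (fun N => birkhoffAverage ℝ (⇑T) _root_.id N gB) atTop (𝓝 P) ∧
      T P = P ∧ ∀ w : Lp ℝ 2 ν, T w = w → ⟪gB - P, w⟫ = 0 := by
    refine ⟨_, hbirk0, ?_, ?_⟩
    · have h := (Submodule.orthogonalProjectionOnto (LinearMap.eqLocus (T : Lp ℝ 2 ν →ₗ[ℝ] Lp ℝ 2 ν)
        ((1 : Lp ℝ 2 ν →L[ℝ] Lp ℝ 2 ν) : Lp ℝ 2 ν →ₗ[ℝ] Lp ℝ 2 ν)) gB).2
      rw [LinearMap.mem_eqLocus] at h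
      simpa using h
    · intro w hw
      refine Submodule.starProjection_inner_eq_zero (K := LinearMap.eqLocus (T : Lp ℝ 2 ν →ₗ[ℝ] Lp ℝ 2 ν)
        ((1 : Lp ℝ 2 ν →L[ℝ] Lp ℝ 2 ν) : Lp ℝ 2 ν →ₗ[ℝ] Lp ℝ 2 ν)) gB w ?_
      rw [LinearMap.mem_eqLocus]
      simpa using hw
  -- P is a.e. constant
  obtain ⟨c, hc⟩ : ∃ c : ℝ, (P : Y → ℝ) =ᵐ[ν] Function.const Y c := by
    refine hS.quasiErgodic.ae_eq_const_of_ae_eq_comp₀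
      (Lp.aestronglyMeasurable P).aemeasurable.nullMeasurable ?_
    have h1 : (T P : Y → ℝ) =ᵐ[ν] (P : Y → ℝ) ∘ S :=
      Lp.coeFn_compMeasurePreserving P hS.toMeasurePreserving
    rw [hPfix] at h1
    exact h1.symm
  -- compute c
  have hcB : c = (ν B).toReal := by
    have h0 : ⟪gB - P, oneL⟫ = 0 := hPorth oneL hTone
    rw [inner_sub_left, sub_eq_zero] at h0
    have h1 : ⟪gB, oneL⟫ = (ν B).toReal := by
      rw [real_inner_comm]
      have := aux_inner_ind (ν := ν) Set.univ B MeasurableSet.univ hB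
      rw [Set.univ_inter] at this
      exact this
    have h2 : ⟪P, oneL⟫ = c := by
      rw [real_inner_comm, honedef, L2.inner_indicatorConstLp_one MeasurableSet.univ _ P]
      rw [Measure.restrict_univ]
      rw [integral_congr_ae hc]
      simp
    rw [h2, h1] at h0
    exact h0.symm
  have hPf : ∀ n, ⟪P, f n⟫ = (ν B).toReal * (ν (A n)).toReal := by
    intro n
    rw [real_inner_comm, hfdef, L2.inner_indicatorConstLp_one (hA n) _ P]
    rw [setIntegral_congr_ae (hA n) ((hc.mono fun y hy _ => hy))]
    simp only [Function.const_apply]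
    rw [setIntegral_const, hcB]
    simp [mul_comm]
    exact mul_comm _ _
  -- key quantitative estimate
  have key : ∀ N : ℕ, 1 ≤ N → ∀ n,
      |⟪gB, f n⟫ - ⟪birkhoffAverage ℝ (⇑T) _root_.id N gB, f n⟫|
        ≤ N * ‖T (f n) - f n‖ * (‖gB‖ + 1) := by
    intro N hN n
    have hNpos : (0:ℝ) < N := by exact_mod_cast hN
    have e1 : ⟪birkhoffAverage ℝ (⇑T) _root_.id N gB, f n⟫
        = (N:ℝ)⁻¹ * ∑ k ∈ Finset.range N, ⟪(⇑T)^[k] gB, f n⟫ := by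
      rw [birkhoffAverage, real_inner_smul_left, birkhoffSum, sum_inner]
      simp
    have e2 : ∀ k : ℕ, ⟪(⇑T)^[k] gB, (⇑T)^[k] (f n) - f n⟫
        = ⟪gB, f n⟫ - ⟪(⇑T)^[k] gB, f n⟫ := by
      intro k; rw [inner_sub_right, hTinner]
    have hsum : ⟪gB, f n⟫ - ⟪birkhoffAverage ℝ (⇑T) _root_.id N gB, f n⟫
        = (N:ℝ)⁻¹ * ∑ k ∈ Finset.range N, ⟪(⇑T)^[k] gB, (⇑T)^[k] (f n) - f n⟫ := by
      rw [e1]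
      have h3 : ∑ k ∈ Finset.range N, ⟪(⇑T)^[k] gB, (⇑T)^[k] (f n) - f n⟫
          = ∑ k ∈ Finset.range N, (⟪gB, f n⟫ - ⟪(⇑T)^[k] gB, f n⟫) :=
        Finset.sum_congr rfl fun k _ => e2 k
      rw [h3, Finset.sum_sub_distrib, Finset.sum_const, Finset.card_range]
      rw [mul_sub, nsmul_eq_mul, ← mul_assoc, inv_mul_cancel₀ (ne_of_gt hNpos), one_mul]
    have hb : ∀ k ∈ Finset.range N, |⟪(⇑T)^[k] gB, (⇑T)^[k] (f n) - f n⟫|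
        ≤ ‖gB‖ * ((N:ℝ) * ‖T (f n) - f n‖) := by
      intro k hk
      refine (abs_real_inner_le_norm _ _).trans ?_
      rw [hTnormiter]
      have h4 := hTiter k (f n)
      have hkN : (k:ℝ) ≤ N := by exact_mod_cast (Finset.mem_range.mp hk).le
      have h5 : ‖(⇑T)^[k] (f n) - f n‖ ≤ (N:ℝ) * ‖T (f n) - f n‖ :=
        h4.trans (by nlinarith [hεnn n])
      exact mul_le_mul_of_nonneg_left h5 (norm_nonneg gB)
    rw [hsum, abs_mul, abs_inv, abs_of_pos hNpos]
    have h6 : |∑ k ∈ Finset.range N, ⟪(⇑T)^[k] gB, (⇑T)^[k] (f n) - f n⟫|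
        ≤ (N:ℝ) * (‖gB‖ * ((N:ℝ) * ‖T (f n) - f n‖)) := by
      refine (Finset.abs_sum_le_sum_abs _ _).trans ?_
      have := Finset.sum_le_sum hb
      simpa [Finset.sum_const, Finset.card_range, nsmul_eq_mul] using this
    calc (N:ℝ)⁻¹ * |∑ k ∈ Finset.range N, ⟪(⇑T)^[k] gB, (⇑T)^[k] (f n) - f n⟫|
        ≤ (N:ℝ)⁻¹ * ((N:ℝ) * (‖gB‖ * ((N:ℝ) * ‖T (f n) - f n‖))) := by
          exact mul_le_mul_of_nonneg_left h6 (by positivity)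
      _ = (N:ℝ) * ‖T (f n) - f n‖ * ‖gB‖ := by field_simp
      _ ≤ (N:ℝ) * ‖T (f n) - f n‖ * (‖gB‖ + 1) := by
          have : (0:ℝ) ≤ (N:ℝ) * ‖T (f n) - f n‖ := by positivity
          nlinarith
  -- the difference tends to zero
  have hD : Tendsto (fun n => ⟪gB, f n⟫ - ⟪P, f n⟫) atTop (𝓝 0) := by
    rw [NormedAddCommGroup.tendsto_nhds_zero]
    intro η hη
    obtain ⟨N₀, hN₀⟩ := Metric.tendsto_atTop.mp hbirk (η/2) (by positivity)
    set N : ℕ := max N₀ 1 with hNdef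
    have hN1 : 1 ≤ N := le_max_right _ _
    have hNb : ‖birkhoffAverage ℝ (⇑T) _root_.id N gB - P‖ < η/2 := by
      have := hN₀ N (le_max_left _ _)
      rwa [dist_eq_norm] at this
    have hpos : (0:ℝ) < η / (2 * ((N:ℝ) * (‖gB‖ + 1))) := by
      have : (0:ℝ) < (N:ℝ) := by exact_mod_cast hN1
      positivity
    have hev : ∀ᶠ n in atTop, ‖T (f n) - f n‖ < η / (2 * ((N:ℝ) * (‖gB‖ + 1))) :=
      hε0.eventually (gt_mem_nhds hpos)
    filter_upwards [hev] with n hn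
    have h1 := key N hN1 n
    have h2 : |⟪birkhoffAverage ℝ (⇑T) _root_.id N gB, f n⟫ - ⟪P, f n⟫|
        ≤ ‖birkhoffAverage ℝ (⇑T) _root_.id N gB - P‖ * ‖f n‖ := by
      rw [← inner_sub_left]
      exact abs_real_inner_le_norm _ _
    have hfn := hfnorm n
    have hNpos : (0:ℝ) < (N:ℝ) := by exact_mod_cast hN1
    have hgB1 : (0:ℝ) < ‖gB‖ + 1 := by positivity
    have hfirst : (N:ℝ) * ‖T (f n) - f n‖ * (‖gB‖ + 1) < η/2 := by
      have := mul_lt_mul_of_pos_left hn (by positivity : (0:ℝ) < (N:ℝ) * (‖gB‖ + 1))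
      calc (N:ℝ) * ‖T (f n) - f n‖ * (‖gB‖ + 1)
          = ((N:ℝ) * (‖gB‖ + 1)) * ‖T (f n) - f n‖ := by ring
        _ < ((N:ℝ) * (‖gB‖ + 1)) * (η / (2 * ((N:ℝ) * (‖gB‖ + 1)))) := this
        _ = η/2 := by field_simp
    have hsecond : ‖birkhoffAverage ℝ (⇑T) _root_.id N gB - P‖ * ‖f n‖ < η/2 := by
      have hb0 : (0:ℝ) ≤ ‖birkhoffAverage ℝ (⇑T) _root_.id N gB - P‖ := norm_nonneg _
      calc ‖birkhoffAverage ℝ (⇑T) _root_.id N gB - P‖ * ‖f n‖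
          ≤ ‖birkhoffAverage ℝ (⇑T) _root_.id N gB - P‖ * 1 :=
            mul_le_mul_of_nonneg_left hfn hb0
        _ < η/2 := by rwa [mul_one]
    have htri : ‖⟪gB, f n⟫ - ⟪P, f n⟫‖
        ≤ |⟪gB, f n⟫ - ⟪birkhoffAverage ℝ (⇑T) _root_.id N gB, f n⟫|
          + |⟪birkhoffAverage ℝ (⇑T) _root_.id N gB, f n⟫ - ⟪P, f n⟫| := by
      rw [Real.norm_eq_abs]
      exact abs_sub_le _ _ _
    linarith
  -- conclude
  have heq : (fun n => (ν (B ∩ A n)).toReal)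
      = fun n => (⟪gB, f n⟫ - ⟪P, f n⟫) + (ν B).toReal * (ν (A n)).toReal := by
    funext n
    rw [hinner_gB n, hPf n]
    ring
  rw [heq]
  have hfinal := hD.add (hAδ.const_mul (ν B).toReal)
  simpa using hfinal
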